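/- Consider the push-sum gradient algorithm: x_i[t+1] = z_i[t] + ε_i[t] where z[t] = Q[t] x[t] with Q[t] = diag(y[t+1])^{-1} P diag(y[t]), P column-stochastic primitive, and the perturbations satisfy ‖ε_i[t]‖ ≤ α_t L / y_i[t+1] for a bounded L and positive weights y_i (bounded below away from 0 along the iteration). If α_t → 0, then for every i, lim_{t→∞} ‖x_i[t] − x̄[t]‖ = 0, where x̄[t] = (1/n) Σ_{j=1}^n x_j[t]. -/

import Mathlib

open Matrix Finset Filter

section Aux
variable {E : Type*} [NormedAddCommGroup E] [NormedSpace ℝ E]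

lemma aux_contraction {f g : ℕ → ℝ} {θ : ℝ} {k : ℕ} (hk : 0 < k)
    (hf : ∀ t, 0 ≤ f t) (hθ0 : 0 ≤ θ) (hθ1 : θ < 1) (hg0 : ∀ t, 0 ≤ g t)
    (hg : Tendsto g atTop (nhds 0))
    (hrec : ∀ t, f (t + k) ≤ θ * f t + g t) :
    Tendsto f atTop (nhds 0) := by
  rw [Metric.tendsto_atTop]
  intro ε hε
  have h1θ : 0 < 1 - θ := by linarith
  obtain ⟨T, hT⟩ := (Metric.tendsto_atTop.1 hg) ((1 - θ) * (ε / 4)) (by positivity)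
  have hgT : ∀ t, T ≤ t → g t ≤ (1 - θ) * (ε / 4) := by
    intro t ht
    have := hT t ht
    rw [Real.dist_eq, sub_zero, abs_of_nonneg (hg0 t)] at this
    linarith
  set M : ℝ := ∑ r ∈ Finset.range k, f (T + r) with hM
  have hM0 : 0 ≤ M := Finset.sum_nonneg fun r _ => hf _
  have hMle : ∀ r, r < k → f (T + r) ≤ M :=
    fun r hr => Finset.single_le_sum (fun s _ => hf _) (Finset.mem_range.2 hr)
  have key : ∀ m r, r < k → f (T + r + m * k) ≤ θ ^ m * M + ε / 4 := by
    intro m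
    induction m with
    | zero => intro r hr; simpa using le_trans (hMle r hr) (by linarith)
    | succ m ih =>
      intro r hr
      have h1 : T + r + (m + 1) * k = (T + r + m * k) + k := by ring
      have h2 := hrec (T + r + m * k)
      have h3 : g (T + r + m * k) ≤ (1 - θ) * (ε / 4) := hgT _ (by omega)
      have h4 := ih r hr
      have h5 : θ * f (T + r + m * k) ≤ θ * (θ ^ m * M + ε / 4) :=
        mul_le_mul_of_nonneg_left h4 hθ0
      rw [h1]
      calc f (T + r + m * k + k) ≤ θ * f (T + r + m * k) + g (T + r + m * k) := h2
        _ ≤ θ * (θ ^ m * M + ε / 4) + (1 - θ) * (ε / 4) := by linarith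
        _ = θ ^ (m + 1) * M + ε / 4 := by ring
  obtain ⟨m₀, hm₀⟩ := (Metric.tendsto_atTop.1
    ((tendsto_pow_atTop_nhds_zero_of_lt_one hθ0 hθ1).mul_const M)) (ε / 2) (by linarith)
  refine ⟨T + m₀ * k, fun t ht => ?_⟩
  have htT : T ≤ t := by omega
  set q := (t - T) / k with hq
  set r := (t - T) % k with hr
  have hrk : r < k := Nat.mod_lt _ hk
  have hqm : m₀ ≤ q := Nat.le_div_iff_mul_le hk |>.2 (by omega)
  have hqk : q * k = k * q := Nat.mul_comm _ _
  have hteq : t = T + r + q * k := by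
    have h := Nat.div_add_mod (t - T) k
    rw [← hq, ← hr] at h
    omega
  have hft : f t ≤ θ ^ q * M + ε / 4 := by rw [hteq]; exact key q r hrk
  simp only [zero_mul] at hm₀
  have hpow : θ ^ q * M < ε / 2 := by
    have := hm₀ q hqm
    rw [Real.dist_eq, sub_zero] at this
    calc θ ^ q * M ≤ |θ ^ q * M| := le_abs_self _
      _ < ε / 2 := this
  rw [Real.dist_eq, sub_zero, abs_of_nonneg (hf t)]
  linarith

lemma aux_col_pow {n : ℕ} (A : Matrix (Fin n) (Fin n) ℝ)
    (hcol : ∀ j, ∑ i, A i j = 1) (m : ℕ) : ∀ j, ∑ i, (A ^ m) i j = 1 := by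
  induction m with
  | zero => intro j; simp [Matrix.one_apply]
  | succ m ih =>
    intro j
    simp only [pow_succ, Matrix.mul_apply]
    rw [Finset.sum_comm]
    calc ∑ l, ∑ i, (A ^ m) i l * A l j = ∑ l, (∑ i, (A ^ m) i l) * A l j := by
          simp [Finset.sum_mul]
      _ = ∑ l, A l j := by simp [ih]
      _ = 1 := hcol j

lemma aux_contract_step {n : ℕ} (B : Matrix (Fin n) (Fin n) ℝ) (c : ℝ)
    (hB : ∀ i j, c ≤ B i j) (hcol : ∀ j, ∑ i, B i j = 1)
    (D : Fin n → E) (hD : ∑ j, D j = 0) :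
    ∑ i, ‖∑ j, B i j • D j‖ ≤ (1 - n * c) * ∑ j, ‖D j‖ := by
  have h1 : ∀ i : Fin n, ∑ j, B i j • D j = ∑ j, (B i j - c) • D j := by
    intro i
    have h2 : ∑ j, (B i j - c) • D j = (∑ j, B i j • D j) - c • ∑ j, D j := by
      rw [Finset.smul_sum, ← Finset.sum_sub_distrib]
      exact Finset.sum_congr rfl fun j _ => by rw [sub_smul]
    rw [h2, hD, smul_zero, sub_zero]
  calc ∑ i, ‖∑ j, B i j • D j‖ ≤ ∑ i, ∑ j, (B i j - c) * ‖D j‖ := by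
        refine Finset.sum_le_sum fun i _ => ?_
        rw [h1 i]
        refine (norm_sum_le _ _).trans (Finset.sum_le_sum fun j _ => ?_)
        rw [norm_smul, Real.norm_eq_abs, abs_of_nonneg (by linarith [hB i j])]
    _ = ∑ j, (∑ i, (B i j - c)) * ‖D j‖ := by
        rw [Finset.sum_comm]
        exact Finset.sum_congr rfl fun j _ => (Finset.sum_mul _ _ _).symm
    _ = ∑ j, (1 - n * c) * ‖D j‖ := by
        refine Finset.sum_congr rfl fun j _ => ?_
        rw [Finset.sum_sub_distrib, hcol j, Finset.sum_const, Finset.card_fin,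
          nsmul_eq_mul]
    _ = (1 - n * c) * ∑ j, ‖D j‖ := by rw [Finset.mul_sum]

lemma aux_iter {n : ℕ} (A : Matrix (Fin n) (Fin n) ℝ)
    (hA : ∀ i j, 0 ≤ A i j) (hcol : ∀ j, ∑ i, A i j = 1)
    (D e : ℕ → Fin n → E)
    (hrec : ∀ t i, D (t + 1) i = (∑ j, A i j • D t j) + e t i)
    (t m : ℕ) :
    ∑ i, ‖D (t + m) i - ∑ j, (A ^ m) i j • D t j‖ ≤
      ∑ s ∈ Finset.range m, ∑ i, ‖e (t + s) i‖ := by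
  induction m with
  | zero => simp [Matrix.one_apply]
  | succ m ih =>
    have key : ∀ i, D (t + (m + 1)) i - ∑ j, (A ^ (m + 1)) i j • D t j
        = (∑ l, A i l • (D (t + m) l - ∑ j, (A ^ m) l j • D t j)) + e (t + m) i := by
      intro i
      have h1 : D (t + (m + 1)) i = (∑ j, A i j • D (t + m) j) + e (t + m) i := hrec (t + m) i
      have h2 : ∑ j, (A ^ (m + 1)) i j • D t j
          = ∑ l, A i l • (∑ j, (A ^ m) l j • D t j) := by
        rw [pow_succ']
        simp only [Matrix.mul_apply, Finset.sum_smul]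
        rw [Finset.sum_comm]
        refine Finset.sum_congr rfl fun l _ => ?_
        rw [Finset.smul_sum]
        exact Finset.sum_congr rfl fun j _ => (smul_smul _ _ _).symm
      have h3 : ∑ l, A i l • (D (t + m) l - ∑ j, (A ^ m) l j • D t j)
          = (∑ l, A i l • D (t + m) l) - ∑ l, A i l • ∑ j, (A ^ m) l j • D t j := by
        simp only [smul_sub]
        exact Finset.sum_sub_distrib _ _
      rw [h1, h2, h3]
      abel
    calc ∑ i, ‖D (t + (m + 1)) i - ∑ j, (A ^ (m + 1)) i j • D t j‖
        ≤ ∑ i, ((∑ l, A i l * ‖D (t + m) l - ∑ j, (A ^ m) l j • D t j‖) + ‖e (t + m) i‖) := by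
          refine Finset.sum_le_sum fun i _ => ?_
          rw [key i]
          refine (norm_add_le _ _).trans (add_le_add_left ?_ _)
          refine (norm_sum_le _ _).trans (Finset.sum_le_sum fun l _ => ?_)
          rw [norm_smul, Real.norm_eq_abs, abs_of_nonneg (hA i l)]
      _ = (∑ l, ‖D (t + m) l - ∑ j, (A ^ m) l j • D t j‖) + ∑ i, ‖e (t + m) i‖ := by
          rw [Finset.sum_add_distrib]
          congr 1
          rw [Finset.sum_comm]
          refine Finset.sum_congr rfl fun l _ => ?_
          rw [← Finset.sum_mul, hcol l, one_mul]
      _ ≤ (∑ s ∈ Finset.range m, ∑ i, ‖e (t + s) i‖) + ∑ i, ‖e (t + m) i‖ :=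
          add_le_add_left ih _
      _ = ∑ s ∈ Finset.range (m + 1), ∑ i, ‖e (t + s) i‖ := by
          rw [Finset.sum_range_succ]

end Aux

theorem stmt_15 {n d : ℕ} (P : Matrix (Fin n) (Fin n) ℝ)
    (hnonneg : ∀ i j, 0 ≤ P i j)
    (hcol : ∀ j, ∑ i, P i j = 1)
    (hprim : ∃ k : ℕ, ∀ i j, 0 < (P ^ k) i j)
    (y : ℕ → Fin n → ℝ)
    (hy : ∀ t, y t = (P ^ t) *ᵥ (fun _ => (1 : ℝ)))
    (hypos : ∀ t i, 0 < y t i)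
    (Q : ℕ → Matrix (Fin n) (Fin n) ℝ)
    (hQ : ∀ t, Q t = Matrix.diagonal (fun i => (y (t + 1) i)⁻¹) * P * Matrix.diagonal (y t))
    (α : ℕ → ℝ) (hαnonneg : ∀ t, 0 ≤ α t)
    (hαlim : Tendsto α atTop (nhds 0))
    (L : ℝ) (hL : 0 ≤ L)
    (x : ℕ → Fin n → EuclideanSpace ℝ (Fin d))
    (ε : ℕ → Fin n → EuclideanSpace ℝ (Fin d))
    (hεbound : ∀ t i, ‖ε t i‖ ≤ α t * L / y (t + 1) i)
    (hupdate : ∀ t i, x (t + 1) i = (∑ j, Q t i j • x t j) + ε t i) :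
    ∀ i, Tendsto (fun t => ‖x t i - (n : ℝ)⁻¹ • ∑ j, x t j‖) atTop (nhds 0) := by
  rcases Nat.eq_zero_or_pos n with hn | hn
  · intro i; exact absurd i.isLt (by omega)
  have hnR : (0:ℝ) < n := Nat.cast_pos.2 hn
  have hnR1 : (1:ℝ) ≤ n := by exact_mod_cast hn
  obtain ⟨k₀, hk₀⟩ := hprim
  set k := k₀ + 1 with hkdef
  have hk1 : 0 < k := Nat.succ_pos _
  have hpowpos : ∀ a b, 0 < (P ^ k) a b := by
    intro a b
    rw [hkdef, pow_succ, Matrix.mul_apply]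
    have hex : ∃ m, 0 < P m b := by
      by_contra h
      push_neg at h
      have h1 : ∑ m, P m b ≤ 0 := Finset.sum_nonpos fun m _ => h m
      rw [hcol b] at h1; linarith
    obtain ⟨m, hm⟩ := hex
    exact Finset.sum_pos' (fun l _ => mul_nonneg (hk₀ a l).le (hnonneg l b))
      ⟨m, Finset.mem_univ m, mul_pos (hk₀ a m) hm⟩
  obtain ⟨p, -, hp⟩ := Finset.exists_min_image (Finset.univ : Finset (Fin n × Fin n))
    (fun p => (P ^ k) p.1 p.2) ⟨(⟨0, hn⟩, ⟨0, hn⟩), Finset.mem_univ _⟩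
  set c := (P ^ k) p.1 p.2 with hcdef
  have hcpos : 0 < c := hpowpos p.1 p.2
  have hcle : ∀ a b, c ≤ (P ^ k) a b := fun a b => hp (a, b) (Finset.mem_univ _)
  have hcolk : ∀ j, ∑ i, (P ^ k) i j = 1 := aux_col_pow P hcol k
  have hnc1 : (n : ℝ) * c ≤ 1 := by
    have h1 : ∑ _i : Fin n, c ≤ ∑ i, (P ^ k) i (⟨0, hn⟩ : Fin n) :=
      Finset.sum_le_sum fun i _ => hcle i _
    rw [Finset.sum_const, Finset.card_fin, nsmul_eq_mul, hcolk] at h1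
    exact h1
  have hθ0 : (0:ℝ) ≤ 1 - n * c := by linarith
  have hθ1 : (1:ℝ) - n * c < 1 := by nlinarith
  -- facts about y
  have hyrec : ∀ t i, y (t + 1) i = ∑ j, P i j * y t j := by
    intro t i
    rw [hy (t + 1), hy t, pow_succ', ← Matrix.mulVec_mulVec]
    simp [Matrix.mulVec, dotProduct]
  have hysum : ∀ t, ∑ i, y t i = n := by
    intro t
    induction t with
    | zero => simp [hy 0]
    | succ t ih =>
      calc ∑ i, y (t+1) i = ∑ i, ∑ j, P i j * y t j :=
            Finset.sum_congr rfl fun i _ => hyrec t i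
        _ = ∑ j, (∑ i, P i j) * y t j := by
            rw [Finset.sum_comm]
            exact Finset.sum_congr rfl fun j _ => (Finset.sum_mul _ _ _).symm
        _ = ∑ j, y t j := by simp [hcol]
        _ = n := ih
  have hyle : ∀ t i, y t i ≤ n := by
    intro t i
    have h1 := Finset.single_le_sum (f := y t) (fun j _ => (hypos t j).le) (Finset.mem_univ i)
    rw [hysum t] at h1
    exact h1
  -- definitions
  set u : ℕ → Fin n → EuclideanSpace ℝ (Fin d) := fun t i => y t i • x t i with hu
  set S : ℕ → EuclideanSpace ℝ (Fin d) := fun t => ∑ i, u t i with hS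
  set δ : ℕ → Fin n → EuclideanSpace ℝ (Fin d) := fun t i => y (t+1) i • ε t i with hδ
  set D : ℕ → Fin n → EuclideanSpace ℝ (Fin d) := fun t i => u t i - ((y t i) / n) • S t with hD
  set e : ℕ → Fin n → EuclideanSpace ℝ (Fin d) :=
    fun t i => δ t i - ((y (t+1) i) / n) • (∑ m, δ t m) with he
  have huapp : ∀ t i, u t i = y t i • x t i := fun t i => rfl
  have hSapp : ∀ t, S t = ∑ i, u t i := fun t => rfl
  have hδapp : ∀ t i, δ t i = y (t+1) i • ε t i := fun t i => rfl
  have hDapp : ∀ t i, D t i = u t i - ((y t i) / n) • S t := fun t i => rfl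
  have heapp : ∀ t i, e t i = δ t i - ((y (t+1) i) / n) • (∑ m, δ t m) := fun t i => rfl
  have hQapp : ∀ t i j, Q t i j = (y (t+1) i)⁻¹ * (P i j * y t j) := by
    intro t i j
    rw [hQ t, Matrix.mul_diagonal, Matrix.diagonal_mul, mul_assoc]
  have hδb : ∀ t i, ‖δ t i‖ ≤ α t * L := by
    intro t i
    rw [hδapp, norm_smul, Real.norm_eq_abs, abs_of_pos (hypos (t+1) i)]
    calc y (t+1) i * ‖ε t i‖ ≤ y (t+1) i * (α t * L / y (t+1) i) :=
          mul_le_mul_of_nonneg_left (hεbound t i) (hypos (t+1) i).le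
      _ = α t * L := by
          rw [mul_div_assoc']
          exact mul_div_cancel_left₀ _ (hypos (t+1) i).ne'
  have hurec : ∀ t i, u (t+1) i = (∑ j, P i j • u t j) + δ t i := by
    intro t i
    rw [huapp, hδapp, hupdate t i, smul_add]
    congr 1
    rw [Finset.smul_sum]
    refine Finset.sum_congr rfl fun j _ => ?_
    rw [hQapp t i j, smul_smul, huapp, smul_smul, ← mul_assoc,
      mul_inv_cancel₀ (hypos (t+1) i).ne', one_mul]
  have hSrec : ∀ t, S (t+1) = S t + ∑ m, δ t m := by
    intro t
    rw [hSapp (t+1), hSapp t]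
    calc ∑ i, u (t+1) i = ∑ i, ((∑ j, P i j • u t j) + δ t i) :=
          Finset.sum_congr rfl fun i _ => hurec t i
      _ = (∑ i, ∑ j, P i j • u t j) + ∑ i, δ t i := Finset.sum_add_distrib
      _ = (∑ j, u t j) + ∑ i, δ t i := by
          congr 1
          rw [Finset.sum_comm]
          refine Finset.sum_congr rfl fun j _ => ?_
          rw [← Finset.sum_smul, hcol j, one_smul]
  have hDsum : ∀ t, ∑ i, D t i = 0 := by
    intro t
    have h1 : ∑ i, (y t i / n) • S t = ((∑ i, y t i) / n) • S t := by
      rw [← Finset.sum_smul, Finset.sum_div]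
    calc ∑ i, D t i = (∑ i, u t i) - ∑ i, (y t i / n) • S t := by
          rw [← Finset.sum_sub_distrib]
      _ = S t - S t := by
          rw [h1, hysum t, div_self (ne_of_gt hnR), one_smul, ← hSapp t]
      _ = 0 := sub_self _
  have hDrec : ∀ t i, D (t+1) i = (∑ j, P i j • D t j) + e t i := by
    intro t i
    have h3 : ∑ j, P i j • D t j = (∑ j, P i j • u t j) - ((y (t+1) i)/n) • S t := by
      calc ∑ j, P i j • D t j
          = ∑ j, (P i j • u t j - (P i j * (y t j / n)) • S t) :=
            Finset.sum_congr rfl fun j _ => by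
              simp only [hDapp, smul_sub, smul_smul]
        _ = (∑ j, P i j • u t j) - ∑ j, (P i j * (y t j / n)) • S t := Finset.sum_sub_distrib _ _
        _ = (∑ j, P i j • u t j) - ((y (t+1) i)/n) • S t := by
            rw [← Finset.sum_smul]
            congr 2
            rw [hyrec t i, Finset.sum_div]
            exact Finset.sum_congr rfl fun j _ => (mul_div_assoc _ _ _).symm
    rw [hDapp, hurec t i, hSrec t, h3, heapp, smul_add]
    abel
  have heb : ∀ t i, ‖e t i‖ ≤ (1 + n) * L * α t := by
    intro t i
    rw [heapp]
    have h1 : ‖∑ m, δ t m‖ ≤ n * (α t * L) := by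
      refine (norm_sum_le _ _).trans ?_
      calc ∑ m, ‖δ t m‖ ≤ ∑ _m : Fin n, α t * L := Finset.sum_le_sum fun m _ => hδb t m
        _ = n * (α t * L) := by rw [Finset.sum_const, Finset.card_fin, nsmul_eq_mul]
    have h2 : ‖((y (t+1) i)/n) • (∑ m, δ t m)‖ ≤ n * (α t * L) := by
      rw [norm_smul, Real.norm_eq_abs,
        abs_of_pos (div_pos (hypos (t+1) i) hnR)]
      have hy1 : y (t+1) i / n ≤ 1 := by
        rw [div_le_one hnR]; exact hyle (t+1) i
      calc (y (t+1) i / n) * ‖∑ m, δ t m‖ ≤ 1 * (n * (α t * L)) :=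
            mul_le_mul hy1 h1 (norm_nonneg _) zero_le_one
        _ = n * (α t * L) := one_mul _
    calc ‖δ t i - ((y (t+1) i)/n) • (∑ m, δ t m)‖
        ≤ ‖δ t i‖ + ‖((y (t+1) i)/n) • (∑ m, δ t m)‖ := norm_sub_le _ _
      _ ≤ α t * L + n * (α t * L) := add_le_add (hδb t i) h2
      _ = (1 + n) * L * α t := by ring
  set V : ℕ → ℝ := fun t => ∑ i, ‖D t i‖ with hV
  have hVapp : ∀ t, V t = ∑ i, ‖D t i‖ := fun t => rfl
  have hV0 : ∀ t, 0 ≤ V t := fun t => Finset.sum_nonneg fun i _ => norm_nonneg _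
  set g : ℕ → ℝ := fun t => ∑ s ∈ Finset.range k, ((n : ℝ) * ((1 + n) * L)) * α (t + s) with hg
  have hgapp : ∀ t, g t = ∑ s ∈ Finset.range k, ((n : ℝ) * ((1 + n) * L)) * α (t + s) :=
    fun t => rfl
  have hg0 : ∀ t, 0 ≤ g t := by
    intro t
    rw [hgapp]
    refine Finset.sum_nonneg fun s _ => mul_nonneg (by positivity) (hαnonneg _)
  have hVrec : ∀ t, V (t + k) ≤ (1 - n * c) * V t + g t := by
    intro t
    have hiter := aux_iter P hnonneg hcol D e hDrec t k
    have hstep := aux_contract_step (P ^ k) c hcle hcolk (D t) (hDsum t)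
    have herr : ∑ s ∈ Finset.range k, ∑ i, ‖e (t + s) i‖ ≤ g t := by
      rw [hgapp]
      refine Finset.sum_le_sum fun s _ => ?_
      calc ∑ i, ‖e (t+s) i‖ ≤ ∑ _i : Fin n, (1 + (n:ℝ)) * L * α (t + s) :=
            Finset.sum_le_sum fun i _ => heb (t+s) i
        _ = (n : ℝ) * ((1+n) * L) * α (t+s) := by
            rw [Finset.sum_const, Finset.card_fin, nsmul_eq_mul]; ring
    calc V (t + k) = ∑ i, ‖D (t+k) i‖ := rfl
      _ ≤ ∑ i, (‖∑ j, (P ^ k) i j • D t j‖ + ‖D (t+k) i - ∑ j, (P ^ k) i j • D t j‖) := by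
          refine Finset.sum_le_sum fun i _ => ?_
          have h4 : D (t+k) i = (∑ j, (P ^ k) i j • D t j)
              + (D (t+k) i - ∑ j, (P ^ k) i j • D t j) := by abel
          rw [h4]
          exact (norm_add_le _ _).trans (by rw [← h4])
      _ = (∑ i, ‖∑ j, (P ^ k) i j • D t j‖)
          + ∑ i, ‖D (t+k) i - ∑ j, (P ^ k) i j • D t j‖ := Finset.sum_add_distrib
      _ ≤ (1 - n * c) * V t + g t := add_le_add hstep (hiter.trans herr)
  have hgl : Tendsto g atTop (nhds 0) := by
    have h1 : ∀ s : ℕ, Tendsto (fun t => ((n : ℝ) * ((1 + n) * L)) * α (t + s)) atTop (nhds 0) := by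
      intro s
      have h2 : Tendsto (fun t => α (t + s)) atTop (nhds 0) :=
        hαlim.comp (Filter.tendsto_add_atTop_nat s)
      simpa using h2.const_mul ((n : ℝ) * ((1 + n) * L))
    have h3 := tendsto_finset_sum (Finset.range k) (fun s _ => h1 s)
    rw [hg]
    simpa using h3
  have hVlim : Tendsto V atTop (nhds 0) :=
    aux_contraction hk1 hV0 hθ0 hθ1 hg0 hgl hVrec
  have hylow : ∀ t j, c * n ≤ y (k + t) j := by
    intro t j
    have h1 : y (k + t) j = ∑ l, (P ^ k) j l * y t l := by
      rw [hy (k + t), hy t, pow_add, ← Matrix.mulVec_mulVec]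
      simp [Matrix.mulVec, dotProduct]
    rw [h1, ← hysum t, Finset.mul_sum]
    exact Finset.sum_le_sum fun l _ =>
      mul_le_mul_of_nonneg_right (hcle j l) (hypos t l).le
  have hxid : ∀ t j, x t j - (n:ℝ)⁻¹ • S t = (y t j)⁻¹ • D t j := by
    intro t j
    have hyne := (hypos t j).ne'
    rw [hDapp, huapp, smul_sub, smul_smul, smul_smul, inv_mul_cancel₀ hyne, one_smul]
    have h5 : (y t j)⁻¹ * (y t j / n) = (n:ℝ)⁻¹ := by
      field_simp
    rw [h5]
  intro i
  have hcn : (0:ℝ) < c * n := by positivity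
  have hfin : ∀ t, k ≤ t → ‖x t i - (n:ℝ)⁻¹ • ∑ j, x t j‖ ≤ (2 / (c * n)) * V t := by
    intro t ht
    obtain ⟨m, rfl⟩ := Nat.exists_eq_add_of_le ht
    have eq1 : x (k+m) i - (n:ℝ)⁻¹ • ∑ j, x (k+m) j
        = (y (k+m) i)⁻¹ • D (k+m) i - (n:ℝ)⁻¹ • ∑ j, (y (k+m) j)⁻¹ • D (k+m) j := by
      rw [← hxid (k+m) i]
      have h5 : ∑ j, (y (k+m) j)⁻¹ • D (k+m) j = ∑ j, (x (k+m) j - (n:ℝ)⁻¹ • S (k+m)) :=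
        Finset.sum_congr rfl fun j _ => (hxid (k+m) j).symm
      rw [h5, Finset.sum_sub_distrib, smul_sub, Finset.sum_const, Finset.card_fin,
        ← Nat.cast_smul_eq_nsmul ℝ, smul_smul, inv_mul_cancel₀ (ne_of_gt hnR), one_smul]
      abel
    rw [eq1]
    have hDle : ∀ j, ‖D (k+m) j‖ ≤ V (k+m) :=
      fun j => Finset.single_le_sum (fun l _ => norm_nonneg _) (Finset.mem_univ j)
    have hb1 : ∀ j, ‖(y (k+m) j)⁻¹ • D (k+m) j‖ ≤ (c*n)⁻¹ * ‖D (k+m) j‖ := by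
      intro j
      rw [norm_smul, Real.norm_eq_abs, abs_of_pos (inv_pos.2 (hypos _ j))]
      exact mul_le_mul_of_nonneg_right (inv_anti₀ hcn (hylow m j)) (norm_nonneg _)
    have h8 : ‖∑ j, (y (k+m) j)⁻¹ • D (k+m) j‖ ≤ (c*n)⁻¹ * V (k+m) := by
      refine (norm_sum_le _ _).trans ?_
      rw [hVapp, Finset.mul_sum]
      exact Finset.sum_le_sum fun j _ => hb1 j
    calc ‖(y (k+m) i)⁻¹ • D (k+m) i - (n:ℝ)⁻¹ • ∑ j, (y (k+m) j)⁻¹ • D (k+m) j‖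
        ≤ ‖(y (k+m) i)⁻¹ • D (k+m) i‖ + ‖(n:ℝ)⁻¹ • ∑ j, (y (k+m) j)⁻¹ • D (k+m) j‖ :=
          norm_sub_le _ _
      _ ≤ (c*n)⁻¹ * V (k+m) + (c*n)⁻¹ * V (k+m) := by
          refine add_le_add ((hb1 i).trans (mul_le_mul_of_nonneg_left (hDle i)
            (inv_pos.2 hcn).le)) ?_
          rw [norm_smul, Real.norm_eq_abs, abs_of_pos (inv_pos.2 hnR)]
          calc (n:ℝ)⁻¹ * ‖∑ j, (y (k+m) j)⁻¹ • D (k+m) j‖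
              ≤ 1 * ((c*n)⁻¹ * V (k+m)) :=
                mul_le_mul (inv_le_one_of_one_le₀ hnR1) h8 (norm_nonneg _)
                  zero_le_one
            _ = (c*n)⁻¹ * V (k+m) := one_mul _
      _ = (2 / (c * n)) * V (k+m) := by ring
  have hVlim2 : Tendsto (fun t => (2 / (c * n)) * V t) atTop (nhds 0) := by
    simpa using hVlim.const_mul (2 / (c * n))
  exact squeeze_zero' (Filter.Eventually.of_forall fun t => norm_nonneg _)
    (Filter.eventually_atTop.2 ⟨k, hfin⟩) hVlim2
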